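/- Let X ⊂ ℝ² be a strictly convex body with 0 ∈ ∂X, and let v₁, v₂ be linearly independent with v₁, v₂, v₁+v₂ ∈ ∂X. Suppose w lies in the open cone {a·v₁ + b·v₂ : a, b > 0} and w ∈ ∂X with w ≠ v₁ + v₂. Then exactly one of the coordinates of w in the basis (v₁, v₂) is greater than 1 and the other lies strictly between 0 and 1. -/

import Mathlib

private lemma lemA_aux {E : Type*} [NormedAddCommGroup E] [NormedSpace ℝ E]
    {X : Set E} (hXconv : Convex ℝ X)
    (hXstrict : ∀ p ∈ frontier X, ∀ q ∈ frontier X, p ≠ q →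
      openSegment ℝ p q ⊆ interior X)
    {v₁ v₂ : E} (hv₂0 : v₂ ≠ 0) (hv₁₂0 : v₁ + v₂ ≠ 0)
    (h0 : (0 : E) ∈ frontier X) (hv₁ : v₁ ∈ frontier X) (hv₁₂ : v₁ + v₂ ∈ frontier X)
    {α β : ℝ} (hα : 0 < α) (hα1 : α ≤ 1) (hβ : 0 < β) (hβα : β ≤ α)
    (hne : ¬(α = 1 ∧ β = 1)) : α • v₁ + β • v₂ ∈ interior X := by
  have h0X : (0 : E) ∈ closure X := frontier_subset_closure h0
  rcases eq_or_lt_of_le hβα with heq | hlt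
  · -- β = α, so α < 1
    subst heq
    have hb1 : β < 1 := by
      rcases lt_or_eq_of_le hα1 with h | h
      · exact h
      · exact absurd ⟨h, h⟩ hne
    have : β • v₁ + β • v₂ ∈ openSegment ℝ (0 : E) (v₁ + v₂) :=
      ⟨1 - β, β, by linarith, hβ, by ring, by rw [smul_zero, zero_add, smul_add]⟩
    exact hXstrict 0 h0 (v₁ + v₂) hv₁₂ (Ne.symm hv₁₂0) this
  · -- β < α
    have hαne : α ≠ 0 := ne_of_gt hα
    have hu : (1 - β / α) • v₁ + (β / α) • (v₁ + v₂) ∈ interior X := by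
      refine hXstrict v₁ hv₁ (v₁ + v₂) hv₁₂ ?_
        ⟨1 - β / α, β / α, ?_, div_pos hβ hα, by ring, rfl⟩
      · intro h; exact hv₂0 (by simpa using h.symm)
      · have : β / α < 1 := (div_lt_one hα).2 hlt
        linarith
    have hcombo := hXconv.combo_interior_closure_mem_interior hu h0X hα
      (by linarith : (0:ℝ) ≤ 1 - α) (by ring)
    have heq : α • ((1 - β / α) • v₁ + (β / α) • (v₁ + v₂)) + (1 - α) • (0 : E)
        = α • v₁ + β • v₂ := by
      match_scalars <;> field_simp <;> ring
    rwa [heq] at hcombo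

/-- If `0, v₁, v₂, v₁+v₂` lie on the boundary of a strictly convex planar body and
`w = a•v₁ + b•v₂` is a boundary point in the open cone spanned by `v₁, v₂` with
`w ≠ v₁ + v₂`, then exactly one of `a, b` is greater than `1` and the other lies
strictly between `0` and `1`. -/
theorem boundary_point_in_cone_coordinates
    (X : Set (EuclideanSpace ℝ (Fin 2)))
    (hXconv : Convex ℝ X) (hXcomp : IsCompact X) (hXint : (interior X).Nonempty)
    (hXstrict : ∀ p ∈ frontier X, ∀ q ∈ frontier X, p ≠ q →
      openSegment ℝ p q ⊆ interior X)
    (v₁ v₂ w : EuclideanSpace ℝ (Fin 2))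
    (hv : LinearIndependent ℝ ![v₁, v₂])
    (h0 : (0 : EuclideanSpace ℝ (Fin 2)) ∈ frontier X)
    (hv₁ : v₁ ∈ frontier X) (hv₂ : v₂ ∈ frontier X) (hv₁₂ : v₁ + v₂ ∈ frontier X)
    (hwX : w ∈ frontier X) (hwne : w ≠ v₁ + v₂)
    (a b : ℝ) (hw : w = a • v₁ + b • v₂) (ha : 0 < a) (hb : 0 < b) :
    (1 < a ∧ 0 < b ∧ b < 1) ∨ (1 < b ∧ 0 < a ∧ a < 1) := by
  have hpair := LinearIndependent.pair_iff.1 hv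
  have hv₁0 : v₁ ≠ 0 := hv.ne_zero 0
  have hv₂0 : v₂ ≠ 0 := hv.ne_zero 1
  have hv₁₂0 : v₁ + v₂ ≠ 0 := by
    intro h
    exact one_ne_zero ((hpair 1 1 (by simpa using h)).1)
  have hv₂₁0 : v₂ + v₁ ≠ 0 := by rwa [add_comm]
  have hv₂₁ : v₂ + v₁ ∈ frontier X := by rwa [add_comm]
  have hwcl : w ∈ closure X := frontier_subset_closure hwX
  have hnotint : ∀ x ∈ frontier X, x ∉ interior X := fun x hx hi => hx.2 hi
  -- Lemma A in both orders
  have lemA : ∀ α β : ℝ, 0 < α → α ≤ 1 → 0 < β → β ≤ 1 → ¬(α = 1 ∧ β = 1) →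
      α • v₁ + β • v₂ ∈ interior X := by
    intro α β hα hα1 hβ hβ1 hne
    rcases le_total β α with h | h
    · exact lemA_aux hXconv hXstrict hv₂0 hv₁₂0 h0 hv₁ hv₁₂ hα hα1 hβ h hne
    · have := lemA_aux hXconv hXstrict hv₁0 hv₂₁0 h0 hv₂ hv₂₁ hβ hβ1 hα h
        (fun hc => hne ⟨hc.2, hc.1⟩)
      rwa [add_comm] at this
  have hab1 : ¬(a = 1 ∧ b = 1) := by
    rintro ⟨rfl, rfl⟩
    exact hwne (by simpa using hw)
  -- Claim 2: not both ≥ 1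
  have hclaim2 : ¬(1 ≤ a ∧ 1 ≤ b) := by
    rintro ⟨ha1, hb1⟩
    set s : ℝ := 1 / (a + b) with hs
    have habpos : 0 < a + b := by linarith
    have hspos : 0 < s := by positivity
    have hsa : s * (a - 1) < 1 := by
      rw [hs, div_mul_eq_mul_div, div_lt_one habpos]; linarith
    have hsb : s * (b - 1) < 1 := by
      rw [hs, div_mul_eq_mul_div, div_lt_one habpos]; linarith
    have hsa0 : 0 ≤ s * (a - 1) := mul_nonneg hspos.le (by linarith)
    have hsb0 : 0 ≤ s * (b - 1) := mul_nonneg hspos.le (by linarith)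
    have hq : (1 - s * (a - 1)) • v₁ + (1 - s * (b - 1)) • v₂ ∈ interior X := by
      refine lemA _ _ (by linarith) (by linarith) (by linarith) (by linarith) ?_
      rintro ⟨h1, h2⟩
      refine hab1 ⟨?_, ?_⟩
      · have : s * (a - 1) = 0 := by linarith
        have := (mul_eq_zero.1 this).resolve_left (ne_of_gt hspos)
        linarith
      · have : s * (b - 1) = 0 := by linarith
        have := (mul_eq_zero.1 this).resolve_left (ne_of_gt hspos)
        linarith
    have h1s : (0:ℝ) < 1 + s := by linarith
    have hcombo := hXconv.combo_interior_closure_mem_interior hq hwcl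
      (a := 1 / (1 + s)) (b := s / (1 + s)) (by positivity)
      (by positivity) (by field_simp)
    have heq : (1 / (1 + s)) • ((1 - s * (a - 1)) • v₁ + (1 - s * (b - 1)) • v₂)
        + (s / (1 + s)) • w = v₁ + v₂ := by
      rw [hw]
      match_scalars
      · field_simp; ring
      · field_simp; ring
    rw [heq] at hcombo
    exact hnotint _ hv₁₂ hcombo
  -- Conclude
  by_cases hA : a ≤ 1
  · by_cases hB : b ≤ 1
    · exact absurd (lemA a b ha hA hb hB hab1) (hw ▸ hnotint w hwX)
    · push_neg at hB
      have haless : a < 1 := by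
        rcases lt_or_eq_of_le hA with h | h
        · exact h
        · exact absurd ⟨h.ge, hB.le⟩ hclaim2
      exact Or.inr ⟨hB, ha, haless⟩
  · push_neg at hA
    have hbless : b < 1 := by
      by_contra h
      push_neg at h
      exact hclaim2 ⟨hA.le, h⟩
    exact Or.inl ⟨hA, hb, hbless⟩
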